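/- arXiv:2502.02726 — 2 statements merged into one kernel-verified Lean document; each statement's English description precedes it below -/
import Mathlib

section
/- Concavity and strong concavity of the dual objective: Define Φ_{α,ε}(f) = Σ_{j=1}^m ∫ f_j dν_j − ε ∫ exp((Σ_{j=1}^m f_j(x_j) − c_α(x))/ε) d(ν_1⊗⋯⊗ν_m)(x) for f = (f_1,…,f_m), f_j ∈ L^∞(ν_j), with gradient pairing ⟨∇Φ_{α,ε}(f), g⟩ = ∫ (Σ_{j=1}^m g_j(x_j))(1 − exp((Σ_{i} f_i(x_i) − c_α(x))/ε)) d(ν_1⊗⋯⊗ν_m)(x) and norm ‖g‖_{𝓛_m}² = Σ_{j=1}^m ∫ g_j² dν_j. Then: (i) Φ_{α,ε}(f) − Φ_{α,ε}(g) ≥ ⟨∇Φ_{α,ε}(f), f − g⟩ for all tuples f, g of bounded functions; and (ii) for L ≥ 0 and β = ε^{-1} exp(−(L + ‖c_α‖_∞)/ε), for all f, g in the set S_L = { f : ‖Σ_{j=1}^m f_j(x_j)‖_{L^∞(ν_1⊗⋯⊗ν_m)} ≤ L and ∫ f_i dν_i = 0 for i ∈ {1,…,m−1} }, one has Φ_{α,ε}(f)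 − Φ_{α,ε}(g) ≥ ⟨∇Φ_{α,ε}(f), f − g⟩ + (β/2)‖f − g‖_{𝓛_m}². -/
open MeasureTheory ProbabilityTheory Filter Topology
open scoped ENNReal NNReal

noncomputable section

/-- `ℝ^d` with the Euclidean norm. -/
abbrev Euc (d : ℕ) : Type := EuclideanSpace ℝ (Fin d)

/-- The multimarginal cost `c_α(x₁,…,x_m) = ∑_{i<j} ‖α_i x_i − α_j x_j‖²`. -/
def costα {m d : ℕ} (α : Fin m → ℝ) (x : Fin m → Euc d) : ℝ :=
  ∑ i : Fin m, ∑ j : Fin m, if i < j then ‖α i • x i - α j • x j‖ ^ 2 else 0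

open scoped Classical in
/-- Kullback–Leibler divergence, valued in `ℝ≥0∞` (it is nonnegative for probability
measures): `KL(P‖Q) = ∫ log (dP/dQ) dP` when `P ≪ Q` and the integrand is integrable,
and `∞` otherwise. -/
def KLdiv {E : Type*} [MeasurableSpace E] (P Q : Measure E) : ℝ≥0∞ :=
  if P ≪ Q ∧ Integrable (fun x => Real.log ((P.rnDeriv Q x).toReal)) P
  then ENNReal.ofReal (∫ x, Real.log ((P.rnDeriv Q x).toReal) ∂P) else ⊤

/-- The entropic multimarginal transport functional
`π ↦ ∫ c_α dπ + ε KL(π ‖ ν₁⊗⋯⊗ν_m)`, valued in `ℝ≥0∞`. -/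
def entCost {m d : ℕ} (α : Fin m → ℝ) (ε : ℝ) (ν : Fin m → Measure (Euc d))
    (π : Measure (Fin m → Euc d)) : ℝ≥0∞ :=
  ∫⁻ x, ENNReal.ofReal (costα α x) ∂π + ENNReal.ofReal ε * KLdiv π (Measure.pi ν)

/-- Membership in the coupling set `Π(ν₁,…,ν_m)`: a probability measure on `𝒳^m`
whose `j`-th marginal is `ν j` for every `j`. -/
def IsCoupling {m d : ℕ} (ν : Fin m → Measure (Euc d))
    (π : Measure (Fin m → Euc d)) : Prop :=
  IsProbabilityMeasure π ∧ ∀ j, π.map (fun x => x j) = ν j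

end

/-- The dual objective `Φ_{α,ε}(f) = ∑ j ∫ f j dν j − ε ∫ exp((∑ j f j (x j) − c_α x)/ε) d(⊗ ν)`. -/
noncomputable def dualObj {m d : ℕ} (α : Fin m → ℝ) (ε : ℝ) (ν : Fin m → Measure (Euc d))
    (f : Fin m → Euc d → ℝ) : ℝ :=
  ∑ j, ∫ x, f j x ∂(ν j)
    - ε * ∫ y, Real.exp ((∑ j, f j (y j) - costα α y) / ε) ∂(Measure.pi ν)

/-- The gradient pairing `⟨∇Φ_{α,ε}(f), g⟩`. -/
noncomputable def gradPairing {m d : ℕ} (α : Fin m → ℝ) (ε : ℝ) (ν : Fin m → Measure (Euc d))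
    (f g : Fin m → Euc d → ℝ) : ℝ :=
  ∫ y, (∑ j, g j (y j)) *
    (1 - Real.exp ((∑ i, f i (y i) - costα α y) / ε)) ∂(Measure.pi ν)


-- core exponential inequality, negative side
lemma aux_I2 {s : ℝ} (hs : 0 ≤ s) : s ^ 2 / 2 ≤ 1 + (s - 1) * Real.exp s := by
  have hder : ∀ x : ℝ, HasDerivAt (fun y => 1 + (y - 1) * Real.exp y - y ^ 2 / 2)
      (x * (Real.exp x - 1)) x := by
    intro x
    have h1 : HasDerivAt (fun y : ℝ => y - 1) 1 x := (hasDerivAt_id x).sub_const 1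
    have h2 : HasDerivAt (fun y : ℝ => (y - 1) * Real.exp y)
        (1 * Real.exp x + (x - 1) * Real.exp x) x := h1.mul (Real.hasDerivAt_exp x)
    have h3 := ((h2.const_add 1).sub ((hasDerivAt_pow 2 x).div_const 2))
    refine HasDerivAt.congr_deriv h3 ?_
    norm_num
    ring
  have hmono : MonotoneOn (fun y => 1 + (y - 1) * Real.exp y - y ^ 2 / 2) (Set.Ici (0:ℝ)) := by
    apply monotoneOn_of_deriv_nonneg (convex_Ici 0)
    · exact (Continuous.sub (continuous_const.add ((continuous_id.sub continuous_const).mul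
        Real.continuous_exp)) (by continuity)).continuousOn
    · intro x _
      exact (hder x).differentiableAt.differentiableWithinAt
    · intro x hx
      rw [interior_Ici] at hx
      rw [(hder x).deriv]
      exact mul_nonneg hx.le (by linarith [Real.one_le_exp hx.le])
  have := hmono (Set.self_mem_Ici) (Set.mem_Ici.2 hs) hs
  simp only [Real.exp_zero] at this
  nlinarith [this]

/-- Second-order Taylor lower bound for `exp`. -/
lemma exp_taylor2 (a b : ℝ) :
    (b - a) ^ 2 / 2 * Real.exp (min a b) ≤ Real.exp b - Real.exp a - (b - a) * Real.exp a := by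
  rcases le_total a b with hab | hba
  · rw [min_eq_left hab]
    have ht : 0 ≤ b - a := by linarith
    have h := Real.quadratic_le_exp_of_nonneg ht
    have hb : Real.exp b = Real.exp a * Real.exp (b - a) := by
      rw [← Real.exp_add]; ring_nf
    rw [hb]
    nlinarith [Real.exp_pos a]
  · rw [min_eq_right hba]
    have hs : 0 ≤ a - b := by linarith
    have h := aux_I2 hs
    have ha : Real.exp a = Real.exp b * Real.exp (a - b) := by
      rw [← Real.exp_add]; ring_nf
    rw [ha]
    nlinarith [Real.exp_pos b]

section Helpers

variable {m d : ℕ} {ν : Fin m → Measure (Euc d)} [∀ j, IsProbabilityMeasure (ν j)]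

lemma integrable_of_ae_bound {X : Type*} [MeasurableSpace X] {μ : Measure X}
    [IsFiniteMeasure μ] {φ : X → ℝ} (hm : AEStronglyMeasurable φ μ) {B : ℝ}
    (hB : ∀ᵐ x ∂μ, |φ x| ≤ B) : Integrable φ μ :=
  ⟨hm, HasFiniteIntegral.of_bounded (C := B) (by simpa [Real.norm_eq_abs] using hB)⟩

lemma pi_map_eval (ν : Fin m → Measure (Euc d)) [∀ j, IsProbabilityMeasure (ν j)] (j : Fin m) :
    (Measure.pi ν).map (fun y => y j) = ν j := by
  classical
  ext s hs
  rw [Measure.map_apply (measurable_pi_apply j) hs]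
  have hpre : (fun y : Fin m → Euc d => y j) ⁻¹' s
      = Set.pi Set.univ (Function.update (fun _ : Fin m => (Set.univ : Set (Euc d))) j s) := by
    ext y
    simp only [Set.mem_preimage, Set.mem_pi, Set.mem_univ, forall_true_left]
    constructor
    · intro hy i
      rcases eq_or_ne i j with rfl | hij
      · simpa using hy
      · simp [Function.update_of_ne hij]
    · intro hy
      simpa using hy j
  rw [hpre, Measure.pi_pi]
  rw [Finset.prod_eq_single j]
  · simp
  · intro i _ hij
    simp [Function.update_of_ne hij]
  · simp

lemma integral_eval (j : Fin m) (φ : Euc d → ℝ) (hφ : AEStronglyMeasurable φ (ν j)) :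
    ∫ y, φ (y j) ∂(Measure.pi ν) = ∫ x, φ x ∂(ν j) := by
  rw [← pi_map_eval ν j, integral_map (measurable_pi_apply j).aemeasurable]
  rw [pi_map_eval ν j]; exact hφ

lemma ae_eval (j : Fin m) {p : Euc d → Prop} (hp : MeasurableSet {x | p x})
    (h : ∀ᵐ x ∂(ν j), p x) : ∀ᵐ y ∂(Measure.pi ν), p (y j) := by
  rw [← ae_map_iff (measurable_pi_apply j).aemeasurable hp, pi_map_eval ν j]
  exact h

lemma integral_eval_mul_eval {i j : Fin m} (hij : i ≠ j) (φ ψ : Euc d → ℝ) :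
    ∫ y, φ (y i) * ψ (y j) ∂(Measure.pi ν)
      = (∫ x, φ x ∂(ν i)) * ∫ x, ψ x ∂(ν j) := by
  classical
  set F : Fin m → Euc d → ℝ := fun k => if k = i then φ else if k = j then ψ else fun _ => 1
    with hF
  have key := MeasureTheory.integral_fintype_prod_eq_prod (𝕜 := ℝ) F (μ := ν)
  have hprod : ∀ y : Fin m → Euc d, (∏ k, F k (y k)) = φ (y i) * ψ (y j) := by
    intro y
    rw [← Finset.mul_prod_erase Finset.univ (fun k => F k (y k)) (Finset.mem_univ i),
      ← Finset.mul_prod_erase _ _ (Finset.mem_erase.2 ⟨hij.symm, Finset.mem_univ j⟩),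
      Finset.prod_eq_one, hF]
    · simp [hij.symm]
    · intro k hk
      simp only [Finset.mem_erase] at hk
      simp [hF, hk.1, hk.2.1]
  have hrhs : (∏ k, ∫ x, F k x ∂(ν k)) = (∫ x, φ x ∂(ν i)) * ∫ x, ψ x ∂(ν j) := by
    rw [← Finset.mul_prod_erase Finset.univ (fun k => ∫ x, F k x ∂(ν k)) (Finset.mem_univ i),
      ← Finset.mul_prod_erase _ _ (Finset.mem_erase.2 ⟨hij.symm, Finset.mem_univ j⟩),
      Finset.prod_eq_one, hF]
    · simp [hij.symm]
    · intro k hk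
      simp only [Finset.mem_erase] at hk
      simp [hF, hk.1, hk.2.1]
  calc ∫ y, φ (y i) * ψ (y j) ∂(Measure.pi ν)
      = ∫ y, ∏ k, F k (y k) ∂(Measure.pi ν) := by
        exact integral_congr_ae (Eventually.of_forall fun y => (hprod y).symm)
    _ = (∫ x, φ x ∂(ν i)) * ∫ x, ψ x ∂(ν j) := by
        rw [← hrhs]; exact key

end Helpers
section Ground

variable {m d : ℕ} {ν : Fin m → Measure (Euc d)} [∀ j, IsProbabilityMeasure (ν j)]

lemma measurable_costα (α : Fin m → ℝ) : Measurable (costα (d := d) α) := by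
  apply Finset.measurable_sum
  intro i _
  apply Finset.measurable_sum
  intro j _
  split_ifs
  · exact (((measurable_pi_apply i).const_smul (α i)).sub
      ((measurable_pi_apply j).const_smul (α j))).norm.pow_const 2
  · exact measurable_const

lemma costα_nonneg (α : Fin m → ℝ) (x : Fin m → Euc d) : 0 ≤ costα α x := by
  apply Finset.sum_nonneg
  intro i _
  apply Finset.sum_nonneg
  intro j _
  split_ifs
  · positivity
  · exact le_refl _

lemma measurable_sum_eval {f : Fin m → Euc d → ℝ} (hfm : ∀ j, Measurable (f j)) :
    Measurable (fun y : Fin m → Euc d => ∑ j, f j (y j)) :=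
  Finset.measurable_sum _ fun j _ => (hfm j).comp (measurable_pi_apply j)

lemma sum_eval_bound {f : Fin m → Euc d → ℝ} (hfm : ∀ j, Measurable (f j))
    (hfb : ∀ j, ∃ B : ℝ, ∀ᵐ x ∂(ν j), |f j x| ≤ B) :
    ∃ B : ℝ, 0 ≤ B ∧ ∀ᵐ y ∂(Measure.pi ν), |∑ j, f j (y j)| ≤ B := by
  choose B hB using hfb
  have hall : ∀ j : Fin m, ∀ᵐ y ∂(Measure.pi ν), |f j (y j)| ≤ B j := fun j =>
    ae_eval j (measurableSet_le (hfm j).abs measurable_const) (hB j)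
  refine ⟨∑ j, |B j|, by positivity, ?_⟩
  filter_upwards [ae_all_iff.2 hall] with y hy
  calc |∑ j, f j (y j)| ≤ ∑ j, |f j (y j)| := Finset.abs_sum_le_sum_abs _ _
    _ ≤ ∑ j, |B j| := Finset.sum_le_sum fun j _ => (hy j).trans (le_abs_self _)

lemma integrable_eval {f : Fin m → Euc d → ℝ} (hfm : ∀ j, Measurable (f j))
    (hfb : ∀ j, ∃ B : ℝ, ∀ᵐ x ∂(ν j), |f j x| ≤ B) (j : Fin m) :
    Integrable (fun y : Fin m → Euc d => f j (y j)) (Measure.pi ν) := by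
  obtain ⟨B, hB⟩ := hfb j
  exact integrable_of_ae_bound ((hfm j).comp (measurable_pi_apply j)).aestronglyMeasurable
    (ae_eval j (measurableSet_le (hfm j).abs measurable_const) hB)

lemma integrable_sum_eval {f : Fin m → Euc d → ℝ} (hfm : ∀ j, Measurable (f j))
    (hfb : ∀ j, ∃ B : ℝ, ∀ᵐ x ∂(ν j), |f j x| ≤ B) :
    Integrable (fun y : Fin m → Euc d => ∑ j, f j (y j)) (Measure.pi ν) :=
  integrable_finset_sum _ fun j _ => integrable_eval hfm hfb j

lemma measurable_expu (α : Fin m → ℝ) (ε : ℝ) {f : Fin m → Euc d → ℝ}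
    (hfm : ∀ j, Measurable (f j)) :
    Measurable (fun y : Fin m → Euc d =>
      Real.exp ((∑ j, f j (y j) - costα α y) / ε)) :=
  (((measurable_sum_eval hfm).sub (measurable_costα α)).div_const ε).exp

lemma expu_ae_bound (α : Fin m → ℝ) {ε : ℝ} (hε : 0 < ε) {f : Fin m → Euc d → ℝ}
    {B : ℝ} (hB : ∀ᵐ y ∂(Measure.pi ν), |∑ j, f j (y j)| ≤ B) :
    ∀ᵐ y ∂(Measure.pi ν),
      |Real.exp ((∑ j, f j (y j) - costα α y) / ε)| ≤ Real.exp (B / ε) := by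
  filter_upwards [hB] with y hy
  rw [abs_of_pos (Real.exp_pos _), Real.exp_le_exp]
  have h0 := costα_nonneg α y
  have : ∑ j, f j (y j) - costα α y ≤ B := by
    have := abs_le.1 hy
    linarith [this.2]
  gcongr

lemma integrable_expu (α : Fin m → ℝ) {ε : ℝ} (hε : 0 < ε) {f : Fin m → Euc d → ℝ}
    (hfm : ∀ j, Measurable (f j))
    (hfb : ∀ j, ∃ B : ℝ, ∀ᵐ x ∂(ν j), |f j x| ≤ B) :
    Integrable (fun y : Fin m → Euc d =>
      Real.exp ((∑ j, f j (y j) - costα α y) / ε)) (Measure.pi ν) := by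
  obtain ⟨B, -, hB⟩ := sum_eval_bound hfm hfb
  exact integrable_of_ae_bound (measurable_expu α ε hfm).aestronglyMeasurable
    (expu_ae_bound α hε hB)

lemma dualObj_eq (α : Fin m → ℝ) (ε : ℝ) {f : Fin m → Euc d → ℝ}
    (hfm : ∀ j, Measurable (f j))
    (hfb : ∀ j, ∃ B : ℝ, ∀ᵐ x ∂(ν j), |f j x| ≤ B) :
    dualObj α ε ν f = (∫ y, (∑ j, f j (y j)) ∂(Measure.pi ν))
      - ε * ∫ y, Real.exp ((∑ j, f j (y j) - costα α y) / ε) ∂(Measure.pi ν) := by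
  unfold dualObj
  congr 1
  rw [integral_finset_sum _ fun j _ => integrable_eval hfm hfb j]
  exact Finset.sum_congr rfl fun j _ =>
    (integral_eval j (f j) (hfm j).aestronglyMeasurable).symm

end Ground

section Decomp

variable {m d : ℕ} {ν : Fin m → Measure (Euc d)} [∀ j, IsProbabilityMeasure (ν j)]

lemma integrable_mix (α : Fin m → ℝ) {ε : ℝ} (hε : 0 < ε) {f g : Fin m → Euc d → ℝ}
    (hfm : ∀ j, Measurable (f j)) (hfb : ∀ j, ∃ B : ℝ, ∀ᵐ x ∂(ν j), |f j x| ≤ B)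
    (hgm : ∀ j, Measurable (g j)) (hgb : ∀ j, ∃ B : ℝ, ∀ᵐ x ∂(ν j), |g j x| ≤ B) :
    Integrable (fun y : Fin m → Euc d => (∑ j, f j (y j) - ∑ j, g j (y j)) *
      Real.exp ((∑ j, f j (y j) - costα α y) / ε)) (Measure.pi ν) := by
  obtain ⟨Bf, hBf0, hBf⟩ := sum_eval_bound (ν := ν) hfm hfb
  obtain ⟨Bg, hBg0, hBg⟩ := sum_eval_bound (ν := ν) hgm hgb
  refine integrable_of_ae_bound
    ((((measurable_sum_eval hfm).sub (measurable_sum_eval hgm)).mul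
      (measurable_expu α ε hfm)).aestronglyMeasurable)
    (B := (Bf + Bg) * Real.exp (Bf / ε)) ?_
  filter_upwards [hBf, hBg, expu_ae_bound (ν := ν) α hε hBf] with y h1 h2 h3
  rw [abs_mul]
  apply mul_le_mul _ h3 (abs_nonneg _) (by positivity)
  calc |∑ j, f j (y j) - ∑ j, g j (y j)| ≤ |∑ j, f j (y j)| + |∑ j, g j (y j)| :=
      abs_sub _ _
    _ ≤ Bf + Bg := add_le_add h1 h2

lemma decomp (α : Fin m → ℝ) {ε : ℝ} (hε : 0 < ε) {f g : Fin m → Euc d → ℝ}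
    (hfm : ∀ j, Measurable (f j)) (hfb : ∀ j, ∃ B : ℝ, ∀ᵐ x ∂(ν j), |f j x| ≤ B)
    (hgm : ∀ j, Measurable (g j)) (hgb : ∀ j, ∃ B : ℝ, ∀ᵐ x ∂(ν j), |g j x| ≤ B) :
    dualObj α ε ν f - dualObj α ε ν g
        - gradPairing α ε ν f (fun j x => f j x - g j x)
      = ∫ y, (ε * (Real.exp ((∑ j, g j (y j) - costα α y) / ε)
            - Real.exp ((∑ j, f j (y j) - costα α y) / ε))
          + (∑ j, f j (y j) - ∑ j, g j (y j)) *
            Real.exp ((∑ j, f j (y j) - costα α y) / ε)) ∂(Measure.pi ν) := by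
  have ISf := integrable_sum_eval (ν := ν) hfm hfb
  have ISg := integrable_sum_eval (ν := ν) hgm hgb
  have IEf := integrable_expu (ν := ν) α hε hfm hfb
  have IEg := integrable_expu (ν := ν) α hε hgm hgb
  have Imix := integrable_mix (ν := ν) α hε hfm hfb hgm hgb
  have ISfg : Integrable (fun y : Fin m → Euc d =>
      ∑ j, f j (y j) - ∑ j, g j (y j)) (Measure.pi ν) := ISf.sub ISg
  have IEfg : Integrable (fun y : Fin m → Euc d =>
      ε * (Real.exp ((∑ j, g j (y j) - costα α y) / ε)
        - Real.exp ((∑ j, f j (y j) - costα α y) / ε))) (Measure.pi ν) :=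
    (IEg.sub IEf).const_mul ε
  have hgrad : gradPairing α ε ν f (fun j x => f j x - g j x)
      = ((∫ y, (∑ j, f j (y j)) ∂(Measure.pi ν)) - ∫ y, (∑ j, g j (y j)) ∂(Measure.pi ν))
        - ∫ y, (∑ j, f j (y j) - ∑ j, g j (y j)) *
            Real.exp ((∑ j, f j (y j) - costα α y) / ε) ∂(Measure.pi ν) := by
    unfold gradPairing
    have : (fun y : Fin m → Euc d => (∑ j, (f j (y j) - g j (y j))) *
        (1 - Real.exp ((∑ i, f i (y i) - costα α y) / ε)))
        = fun y => (∑ j, f j (y j) - ∑ j, g j (y j))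
          - (∑ j, f j (y j) - ∑ j, g j (y j)) *
            Real.exp ((∑ j, f j (y j) - costα α y) / ε) := by
      funext y
      rw [Finset.sum_sub_distrib]
      ring
    rw [this, integral_sub ISfg Imix, integral_sub ISf ISg]
  have hrhs : ∫ y, (ε * (Real.exp ((∑ j, g j (y j) - costα α y) / ε)
            - Real.exp ((∑ j, f j (y j) - costα α y) / ε))
          + (∑ j, f j (y j) - ∑ j, g j (y j)) *
            Real.exp ((∑ j, f j (y j) - costα α y) / ε)) ∂(Measure.pi ν)
      = ε * ((∫ y, Real.exp ((∑ j, g j (y j) - costα α y) / ε) ∂(Measure.pi ν))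
            - ∫ y, Real.exp ((∑ j, f j (y j) - costα α y) / ε) ∂(Measure.pi ν))
        + ∫ y, (∑ j, f j (y j) - ∑ j, g j (y j)) *
            Real.exp ((∑ j, f j (y j) - costα α y) / ε) ∂(Measure.pi ν) := by
    rw [integral_add IEfg Imix, integral_const_mul,
      integral_sub IEg IEf]
  rw [dualObj_eq (ν := ν) α ε hfm hfb, dualObj_eq (ν := ν) α ε hgm hgb, hgrad, hrhs]
  ring

end Decomp

section SqSum

variable {m d : ℕ} {ν : Fin m → Measure (Euc d)} [∀ j, IsProbabilityMeasure (ν j)]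

lemma integral_sq_sum {h : Fin m → Euc d → ℝ} (hhm : ∀ j, Measurable (h j))
    (hhb : ∀ j, ∃ B : ℝ, ∀ᵐ x ∂(ν j), |h j x| ≤ B)
    (hmean : ∀ i j : Fin m, i ≠ j → (∫ x, h i x ∂(ν i)) * (∫ x, h j x ∂(ν j)) = 0) :
    ∫ y, (∑ j, h j (y j)) ^ 2 ∂(Measure.pi ν) = ∑ j, ∫ x, (h j x) ^ 2 ∂(ν j) := by
  choose B hB using hhb
  have hint : ∀ i j : Fin m, Integrable
      (fun y : Fin m → Euc d => h i (y i) * h j (y j)) (Measure.pi ν) := by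
    intro i j
    refine integrable_of_ae_bound
      ((((hhm i).comp (measurable_pi_apply i)).mul
        ((hhm j).comp (measurable_pi_apply j))).aestronglyMeasurable)
      (B := |B i| * |B j|) ?_
    filter_upwards [ae_eval i (measurableSet_le (hhm i).abs measurable_const) (hB i),
      ae_eval j (measurableSet_le (hhm j).abs measurable_const) (hB j)] with y h1 h2
    rw [abs_mul]
    exact mul_le_mul (h1.trans (le_abs_self _)) (h2.trans (le_abs_self _))
      (abs_nonneg _) (abs_nonneg _)
  calc ∫ y, (∑ j, h j (y j)) ^ 2 ∂(Measure.pi ν)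
      = ∫ y, ∑ i, ∑ j, h i (y i) * h j (y j) ∂(Measure.pi ν) := by
        refine integral_congr_ae (Eventually.of_forall fun y => ?_)
        show (∑ j, h j (y j)) ^ 2 = ∑ i, ∑ j, h i (y i) * h j (y j)
        rw [show ((∑ j, h j (y j)) ^ 2) = (∑ j, h j (y j)) * (∑ j, h j (y j)) from by ring]
        exact Finset.sum_mul_sum _ _ _ _
    _ = ∑ i, ∑ j, ∫ y, h i (y i) * h j (y j) ∂(Measure.pi ν) := by
        rw [integral_finset_sum _ fun i _ =>
          integrable_finset_sum _ fun j _ => hint i j]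
        exact Finset.sum_congr rfl fun i _ =>
          integral_finset_sum _ fun j _ => hint i j
    _ = ∑ i, ∫ x, (h i x) ^ 2 ∂(ν i) := by
        refine Finset.sum_congr rfl fun i _ => ?_
        rw [Finset.sum_eq_single i]
        · have : ∫ y, h i (y i) * h i (y i) ∂(Measure.pi ν)
              = ∫ x, h i x * h i x ∂(ν i) :=
            integral_eval i (fun x => h i x * h i x)
              ((hhm i).mul (hhm i)).aestronglyMeasurable
          rw [this]
          exact integral_congr_ae (Eventually.of_forall fun x => (by ring : h i x * h i x = h i x ^ 2))
        · intro b _ hbi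
          rw [integral_eval_mul_eval (Ne.symm hbi)]
          exact hmean i b (Ne.symm hbi)
        · intro hi
          exact absurd (Finset.mem_univ i) hi
  
end SqSum

/-- **Concavity and strong concavity of the dual objective.** (i) `Φ_{α,ε}` is concave:
`Φ_{α,ε}(f) − Φ_{α,ε}(g) ≥ ⟨∇Φ_{α,ε}(f), f − g⟩` for all tuples of (essentially) bounded
measurable functions; (ii) on the set `S_L` of tuples with `‖∑ j f j (x j)‖_{L^∞(⊗ν)} ≤ L`
and `∫ f i dν i = 0` for `i ∈ {1,…,m−1}`, it is `β`-strongly concave with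
`β = ε⁻¹ exp(−(L + ‖c_α‖_∞)/ε)`. -/
theorem dual_objective_concavity {d m : ℕ} (hm : 0 < m)
    (𝒳 : Set (Euc d)) (h𝒳c : IsCompact 𝒳) (h𝒳b : ∀ x ∈ 𝒳, ∀ i, |x i| ≤ 1)
    (h𝒳int : (interior 𝒳).Nonempty)
    (ν : Fin m → Measure (Euc d)) (hν : ∀ j, IsProbabilityMeasure (ν j))
    (hνsupp : ∀ j, ν j 𝒳 = 1)
    (α : Fin m → ℝ) (hα : ∀ i, 0 ≤ α i) (hα1 : ∑ i, α i = 1)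
    (ε : ℝ) (hε : 0 < ε)
    (Mc : ℝ) (hMc : ∀ᵐ x ∂(Measure.pi ν), costα α x ≤ Mc) :
    (∀ f g : Fin m → Euc d → ℝ,
      (∀ j, Measurable (f j)) → (∀ j, ∃ B : ℝ, ∀ᵐ x ∂(ν j), |f j x| ≤ B) →
      (∀ j, Measurable (g j)) → (∀ j, ∃ B : ℝ, ∀ᵐ x ∂(ν j), |g j x| ≤ B) →
      dualObj α ε ν f - dualObj α ε ν g ≥
        gradPairing α ε ν f (fun j x => f j x - g j x)) ∧
    (∀ L : ℝ, 0 ≤ L → ∀ f g : Fin m → Euc d → ℝ,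
      (∀ j, Measurable (f j)) → (∀ j, ∃ B : ℝ, ∀ᵐ x ∂(ν j), |f j x| ≤ B) →
      (∀ j, Measurable (g j)) → (∀ j, ∃ B : ℝ, ∀ᵐ x ∂(ν j), |g j x| ≤ B) →
      (∀ᵐ x ∂(Measure.pi ν), |∑ j, f j (x j)| ≤ L) →
      (∀ k : Fin m, (k : ℕ) + 1 < m → ∫ x, f k x ∂(ν k) = 0) →
      (∀ᵐ x ∂(Measure.pi ν), |∑ j, g j (x j)| ≤ L) →
      (∀ k : Fin m, (k : ℕ) + 1 < m → ∫ x, g k x ∂(ν k) = 0) →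
      dualObj α ε ν f - dualObj α ε ν g ≥
        gradPairing α ε ν f (fun j x => f j x - g j x)
          + (ε⁻¹ * Real.exp (-(L + Mc) / ε)) / 2
            * ∑ j, ∫ x, (f j x - g j x) ^ 2 ∂(ν j)) := by
  haveI : ∀ j, IsProbabilityMeasure (ν j) := hν
  constructor
  · -- Part (i): concavity
    intro f g hfm hfb hgm hgb
    have hd := decomp (ν := ν) α hε hfm hfb hgm hgb
    have h0 : 0 ≤ ∫ y, (ε * (Real.exp ((∑ j, g j (y j) - costα α y) / ε)
            - Real.exp ((∑ j, f j (y j) - costα α y) / ε))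
          + (∑ j, f j (y j) - ∑ j, g j (y j)) *
            Real.exp ((∑ j, f j (y j) - costα α y) / ε)) ∂(Measure.pi ν) := by
      refine integral_nonneg fun y => ?_
      set a := (∑ j, f j (y j) - costα α y) / ε with ha
      set b := (∑ j, g j (y j) - costα α y) / ε with hb
      have hdiff : ε * (b - a) = ∑ j, g j (y j) - ∑ j, f j (y j) := by
        rw [ha, hb]; field_simp; ring
      have ht := exp_taylor2 a b
      have hmin : (0:ℝ) ≤ (b - a) ^ 2 / 2 * Real.exp (min a b) := by positivity
      have h2 : (∑ j, f j (y j) - ∑ j, g j (y j)) * Real.exp a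
          = -(ε * ((b - a) * Real.exp a)) := by
        have h4 : (∑ j, f j (y j) - ∑ j, g j (y j)) = -(ε * (b - a)) := by linarith
        rw [h4]; ring
      have h5 : 0 ≤ ε * (Real.exp b - Real.exp a - (b - a) * Real.exp a) :=
        mul_nonneg hε.le (by linarith)
      have h3 : ε * (Real.exp b - Real.exp a - (b - a) * Real.exp a)
          = ε * (Real.exp b - Real.exp a) - ε * ((b - a) * Real.exp a) := by ring
      show (0:ℝ) ≤ ε * (Real.exp b - Real.exp a)
          + (∑ j, f j (y j) - ∑ j, g j (y j)) * Real.exp a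
      linarith
    linarith
  · -- Part (ii): strong concavity
    intro L hL f g hfm hfb hgm hgb hfL hf0 hgL hg0
    have hd := decomp (ν := ν) α hε hfm hfb hgm hgb
    set β : ℝ := ε⁻¹ * Real.exp (-(L + Mc) / ε) with hβ
    have hβpos : 0 < β := by positivity
    obtain ⟨Bf, hBf0, hBf⟩ := sum_eval_bound (ν := ν) hfm hfb
    obtain ⟨Bg, hBg0, hBg⟩ := sum_eval_bound (ν := ν) hgm hgb
    have IEf := integrable_expu (ν := ν) α hε hfm hfb
    have IEg := integrable_expu (ν := ν) α hε hgm hgb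
    have Imix := integrable_mix (ν := ν) α hε hfm hfb hgm hgb
    have IR : Integrable (fun y : Fin m → Euc d =>
        ε * (Real.exp ((∑ j, g j (y j) - costα α y) / ε)
            - Real.exp ((∑ j, f j (y j) - costα α y) / ε))
          + (∑ j, f j (y j) - ∑ j, g j (y j)) *
            Real.exp ((∑ j, f j (y j) - costα α y) / ε)) (Measure.pi ν) :=
      ((IEg.sub IEf).const_mul ε).add Imix
    have Ilow : Integrable (fun y : Fin m → Euc d =>
        β / 2 * (∑ j, f j (y j) - ∑ j, g j (y j)) ^ 2) (Measure.pi ν) := by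
      refine integrable_of_ae_bound
        ((((measurable_sum_eval hfm).sub (measurable_sum_eval hgm)).pow_const 2).const_mul
          (β / 2)).aestronglyMeasurable (B := β / 2 * (Bf + Bg) ^ 2) ?_
      filter_upwards [hBf, hBg] with y h1 h2
      rw [abs_mul, abs_of_pos (by positivity : (0:ℝ) < β / 2)]
      have : |∑ j, f j (y j) - ∑ j, g j (y j)| ≤ Bf + Bg :=
        (abs_sub _ _).trans (add_le_add h1 h2)
      have hsq : (∑ j, f j (y j) - ∑ j, g j (y j)) ^ 2 ≤ (Bf + Bg) ^ 2 := by
        rw [← sq_abs]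
        exact pow_le_pow_left₀ (abs_nonneg _) this 2
      rw [abs_of_nonneg (by positivity : (0:ℝ) ≤ (∑ j, f j (y j) - ∑ j, g j (y j)) ^ 2)]
      exact mul_le_mul_of_nonneg_left hsq (by positivity)
    have hmono : (∫ y, (β / 2 * (∑ j, f j (y j) - ∑ j, g j (y j)) ^ 2) ∂(Measure.pi ν))
        ≤ ∫ y, (ε * (Real.exp ((∑ j, g j (y j) - costα α y) / ε)
            - Real.exp ((∑ j, f j (y j) - costα α y) / ε))
          + (∑ j, f j (y j) - ∑ j, g j (y j)) *
            Real.exp ((∑ j, f j (y j) - costα α y) / ε)) ∂(Measure.pi ν) := by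
      refine integral_mono_ae Ilow IR ?_
      filter_upwards [hfL, hgL, hMc] with y h1 h2 h3
      set a := (∑ j, f j (y j) - costα α y) / ε with ha
      set b := (∑ j, g j (y j) - costα α y) / ε with hb
      have hc0 := costα_nonneg α y
      have hdiff : ε * (b - a) = ∑ j, g j (y j) - ∑ j, f j (y j) := by
        rw [ha, hb]; field_simp; ring
      have hamin : -(L + Mc) / ε ≤ a := by
        rw [ha]
        refine (div_le_div_iff_of_pos_right hε).2 ?_
        have := (abs_le.1 h1).1
        linarith
      have hbmin : -(L + Mc) / ε ≤ b := by
        rw [hb]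
        refine (div_le_div_iff_of_pos_right hε).2 ?_
        have := (abs_le.1 h2).1
        linarith
      have hminab : Real.exp (-(L + Mc) / ε) ≤ Real.exp (min a b) :=
        Real.exp_le_exp.2 (le_min hamin hbmin)
      have ht := exp_taylor2 a b
      have key : β / 2 * (∑ j, f j (y j) - ∑ j, g j (y j)) ^ 2
          = ε * ((b - a) ^ 2 / 2 * Real.exp (-(L + Mc) / ε)) := by
        have h4 : (∑ j, f j (y j) - ∑ j, g j (y j)) = -(ε * (b - a)) := by linarith
        rw [h4, hβ]
        field_simp
      have hstep : ε * ((b - a) ^ 2 / 2 * Real.exp (-(L + Mc) / ε))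
          ≤ ε * ((b - a) ^ 2 / 2 * Real.exp (min a b)) := by
        apply mul_le_mul_of_nonneg_left _ hε.le
        apply mul_le_mul_of_nonneg_left hminab (by positivity)
      have hstep2 : ε * ((b - a) ^ 2 / 2 * Real.exp (min a b))
          ≤ ε * (Real.exp b - Real.exp a - (b - a) * Real.exp a) :=
        mul_le_mul_of_nonneg_left ht hε.le
      have h2' : (∑ j, f j (y j) - ∑ j, g j (y j)) * Real.exp a
          = -(ε * ((b - a) * Real.exp a)) := by
        have h4 : (∑ j, f j (y j) - ∑ j, g j (y j)) = -(ε * (b - a)) := by linarith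
        rw [h4]; ring
      have h3' : ε * (Real.exp b - Real.exp a - (b - a) * Real.exp a)
          = ε * (Real.exp b - Real.exp a) - ε * ((b - a) * Real.exp a) := by ring
      show β / 2 * (∑ j, f j (y j) - ∑ j, g j (y j)) ^ 2
          ≤ ε * (Real.exp b - Real.exp a)
          + (∑ j, f j (y j) - ∑ j, g j (y j)) * Real.exp a
      linarith
    have hlow_eq : (∫ y, (β / 2 * (∑ j, f j (y j) - ∑ j, g j (y j)) ^ 2) ∂(Measure.pi ν))
        = β / 2 * ∑ j, ∫ x, (f j x - g j x) ^ 2 ∂(ν j) := by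
      rw [integral_const_mul]
      congr 1
      have hcongr : (fun y : Fin m → Euc d => (∑ j, f j (y j) - ∑ j, g j (y j)) ^ 2)
          = fun y => (∑ j, (f j (y j) - g j (y j))) ^ 2 := by
        funext y
        rw [Finset.sum_sub_distrib]
      rw [hcongr]
      refine integral_sq_sum (ν := ν) (h := fun j x => f j x - g j x)
        (fun j => (hfm j).sub (hgm j)) ?_ ?_
      · intro j
        obtain ⟨B1, hB1⟩ := hfb j
        obtain ⟨B2, hB2⟩ := hgb j
        refine ⟨B1 + B2, ?_⟩
        filter_upwards [hB1, hB2] with x u1 u2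
        exact (abs_sub _ _).trans (add_le_add u1 u2)
      · intro i j hij
        have hzero : ∀ k : Fin m, (k : ℕ) + 1 < m → ∫ x, (f k x - g k x) ∂(ν k) = 0 := by
          intro k hk
          obtain ⟨B1, hB1⟩ := hfb k
          obtain ⟨B2, hB2⟩ := hgb k
          have If : Integrable (f k) (ν k) :=
            integrable_of_ae_bound (hfm k).aestronglyMeasurable hB1
          have Ig : Integrable (g k) (ν k) :=
            integrable_of_ae_bound (hgm k).aestronglyMeasurable hB2
          rw [integral_sub If Ig, hf0 k hk, hg0 k hk, sub_zero]
        rcases lt_or_ge ((i : ℕ) + 1) m with hi | hi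
        · rw [hzero i hi, zero_mul]
        · have hj : (j : ℕ) + 1 < m := by
            rcases lt_or_ge ((j : ℕ) + 1) m with h | h
            · exact h
            · exfalso
              apply hij
              have hi' : (i : ℕ) = m - 1 := by omega
              have hj' : (j : ℕ) = m - 1 := by
                have := j.isLt
                omega
              exact Fin.ext (by rw [hi', hj'])
          rw [hzero j hj, mul_zero]
    rw [ge_iff_le]
    calc gradPairing α ε ν f (fun j x => f j x - g j x)
          + ε⁻¹ * Real.exp (-(L + Mc) / ε) / 2 * ∑ j, ∫ x, (f j x - g j x) ^ 2 ∂(ν j)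
        = gradPairing α ε ν f (fun j x => f j x - g j x)
          + ∫ y, (β / 2 * (∑ j, f j (y j) - ∑ j, g j (y j)) ^ 2) ∂(Measure.pi ν) := by
          rw [hlow_eq]
      _ ≤ dualObj α ε ν f - dualObj α ε ν g := by linarith
end

section
/- Variance bound for the empirical mass defect of a feasible Gibbs density: Let p : 𝒳^m → ℝ be measurable with |1 − p| ≤ M (ν_1⊗⋯⊗ν_m)-almost everywhere for some M > 0, and suppose p satisfies the marginal feasibility constraints: for every j ∈ {1,…,m} and ν_j-a.e. x_j, ∫ p(x_1,…,x_m) d(⊗_{i≠j}ν_i) = 1. Then E[ ( ∫ (1 − p) d(ν̂_1^N ⊗ ⋯ ⊗ ν̂_m^N) )² ] ≤ M² · m / N, where the expectation is over the random samples. -/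
open MeasureTheory ProbabilityTheory Filter Topology
open scoped ENNReal NNReal

/-- The empirical measure `N⁻¹ ∑_{k} δ_{x k}` of a point cloud `x`. -/
noncomputable def empMeas {E : Type*} [MeasurableSpace E] {N : ℕ} (x : Fin N → E) :
    Measure E :=
  (N : ℝ≥0∞)⁻¹ • ∑ k : Fin N, Measure.dirac (x k)



section AuxEmp
open MeasureTheory ProbabilityTheory

lemma empMeas_isProb {E : Type*} [MeasurableSpace E] {N : ℕ} (hN : 0 < N) (x : Fin N → E) :
    IsProbabilityMeasure (empMeas x) := by
  constructor
  simp only [empMeas, Measure.smul_apply, Measure.coe_finset_sum, Finset.sum_apply,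
    Measure.dirac_apply_of_mem (Set.mem_univ _), Finset.sum_const, Finset.card_univ,
    Fintype.card_fin, nsmul_eq_mul, mul_one, smul_eq_mul]
  exact ENNReal.inv_mul_cancel (by exact_mod_cast hN.ne') (ENNReal.natCast_ne_top N)

lemma pi_empMeas {E : Type*} [MeasurableSpace E] {m N : ℕ} (hN : 0 < N) (x : Fin m → Fin N → E) :
    Measure.pi (fun j => empMeas (x j)) =
      ((N : ℝ≥0∞) ^ m)⁻¹ • ∑ k : Fin m → Fin N, Measure.dirac (fun j => x j (k j)) := by
  classical
  haveI : ∀ j, IsProbabilityMeasure (empMeas (x j)) := fun j => empMeas_isProb hN (x j)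
  refine Measure.pi_eq fun s hs => ?_
  have hbox : MeasurableSet (Set.pi Set.univ s) := MeasurableSet.univ_pi hs
  rw [Measure.smul_apply, Measure.coe_finset_sum, Finset.sum_apply]
  have hdir : ∀ k : Fin m → Fin N,
      Measure.dirac (fun j => x j (k j)) (Set.pi Set.univ s)
        = ∏ j : Fin m, (if x j (k j) ∈ s j then (1:ℝ≥0∞) else 0) := by
    intro k
    rw [Measure.dirac_apply' _ hbox, Set.indicator_apply, Finset.prod_boole]
    simp [Set.mem_pi]
  simp_rw [hdir]
  rw [← Fintype.prod_sum (fun (j : Fin m) (a : Fin N) => if x j a ∈ s j then (1:ℝ≥0∞) else 0)]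
  have hemp : ∀ j, empMeas (x j) (s j)
      = (N : ℝ≥0∞)⁻¹ * ∑ a : Fin N, (if x j a ∈ s j then (1:ℝ≥0∞) else 0) := by
    intro j
    simp only [empMeas, Measure.smul_apply, Measure.coe_finset_sum, Finset.sum_apply,
      smul_eq_mul]
    congr 1
    refine Finset.sum_congr rfl fun a _ => ?_
    rw [Measure.dirac_apply' _ (hs j), Set.indicator_apply]
    rfl
  simp_rw [hemp]
  rw [Finset.prod_mul_distrib, Finset.prod_const, Finset.card_univ, Fintype.card_fin,
    smul_eq_mul, ← ENNReal.inv_pow]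

lemma integral_pi_empMeas {E : Type*} [MeasurableSpace E] {m N : ℕ} (hN : 0 < N)
    (x : Fin m → Fin N → E) (g : (Fin m → E) → ℝ) (hg : StronglyMeasurable g) :
    ∫ y, g y ∂(Measure.pi (fun j => empMeas (x j))) =
      ((N : ℝ) ^ m)⁻¹ * ∑ k : Fin m → Fin N, g (fun j => x j (k j)) := by
  rw [pi_empMeas hN, integral_smul_measure, integral_finset_sum_measure ?_]
  · simp_rw [integral_dirac' _ _ hg]
    rw [smul_eq_mul]
    congr 1
    simp [ENNReal.toReal_inv]
  · intro k _
    refine ⟨hg.aestronglyMeasurable, ?_⟩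
    simp only [HasFiniteIntegral, lintegral_dirac' _ (hg.measurable.nnnorm.coe_nnreal_ennreal)]
    rw [lintegral_dirac' _ hg.measurable.enorm]
    exact enorm_lt_top

lemma sum_eval_eq {m N : ℕ} (hm : 0 < m) (j : Fin m) (h : Fin N → ℝ) :
    ∑ k : Fin m → Fin N, h (k j) = (N : ℝ) ^ (m - 1) * ∑ a : Fin N, h a := by
  classical
  rw [← Equiv.sum_comp (Equiv.piSplitAt j (fun _ : Fin m => Fin N)).symm
    (fun k : Fin m → Fin N => h (k j))]
  simp only [Equiv.piSplitAt_symm_apply, dif_pos]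
  rw [Fintype.sum_prod_type]
  have hcard : Fintype.card ({i : Fin m // i ≠ j} → Fin N) = N ^ (m - 1) := by
    rw [Fintype.card_fun, Fintype.card_fin, Fintype.card_subtype_compl,
      Fintype.card_subtype_eq, Fintype.card_fin]
  simp only [Finset.sum_const, nsmul_eq_mul, Finset.card_univ, hcard]
  push_cast
  rw [← Finset.mul_sum]

lemma joint_law {d m N : ℕ} {Ω : Type} [MeasurableSpace Ω] {μ : Measure Ω}
    {ν : Fin m → Measure (Euc d)} [∀ j, IsProbabilityMeasure (ν j)]
    {X : Fin m → Fin N → Ω → Euc d} (hXm : ∀ j k, Measurable (X j k))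
    (hXlaw : ∀ j k, μ.map (X j k) = ν j)
    (hXindep : iIndepFun (fun (p : Fin m × Fin N) ω => X p.1 p.2 ω) μ)
    (k : Fin m → Fin N) :
    μ.map (fun ω (j : Fin m) => X j (k j) ω) = Measure.pi ν := by
  classical
  have hYm : Measurable (fun ω (j : Fin m) => X j (k j) ω) :=
    measurable_pi_lambda _ fun j => hXm j (k j)
  refine (Measure.pi_eq fun s hs => ?_).symm
  rw [Measure.map_apply hYm (MeasurableSet.univ_pi hs)]
  set S : Finset (Fin m × Fin N) := Finset.univ.image (fun j => (j, k j)) with hS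
  set sets : ∀ _ : Fin m × Fin N, Set (Euc d) :=
    fun i => if i.2 = k i.1 then s i.1 else Set.univ with hsets
  have hpre : (fun ω (j : Fin m) => X j (k j) ω) ⁻¹' Set.pi Set.univ s
      = ⋂ i ∈ S, (fun ω => X i.1 i.2 ω) ⁻¹' sets i := by
    ext ω
    simp only [Set.mem_preimage, Set.mem_pi, Set.mem_univ, true_implies, Set.mem_iInter,
      hS, Finset.mem_image, Finset.mem_univ, true_and, hsets]
    constructor
    · rintro h i ⟨j', rfl⟩
      simpa using h j'
    · intro h j
      have := h (j, k j) ⟨j, rfl⟩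
      simpa using this
  rw [hpre, hXindep.measure_inter_preimage_eq_mul S (fun i _ => by
      by_cases h : i.2 = k i.1 <;> simp only [hsets, h, if_true, if_false] <;>
        first | exact hs i.1 | exact MeasurableSet.univ)]
  rw [hS, Finset.prod_image (fun a _ b _ h => congrArg Prod.fst h)]
  refine Finset.prod_congr rfl fun j _ => ?_
  rw [← hXlaw j (k j), Measure.map_apply (hXm j (k j)) (hs j)]
  simp [hsets]

lemma measurable_update_pair {d m : ℕ} (j : Fin m) :
    Measurable fun z : (Fin m → Euc d) × Euc d => Function.update z.1 j z.2 := by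
  apply measurable_pi_lambda
  intro i
  simp only [Function.update_apply]
  by_cases h : i = j
  · simpa [h] using measurable_snd
  · simp [h]; exact (measurable_pi_apply i).comp measurable_fst

lemma map_update_pi {d m : ℕ} (ν : Fin m → Measure (Euc d)) [∀ j, IsProbabilityMeasure (ν j)]
    (j : Fin m) :
    Measure.map (fun z : (Fin m → Euc d) × Euc d => Function.update z.1 j z.2)
      ((Measure.pi ν).prod (ν j)) = Measure.pi ν := by
  classical
  refine (Measure.pi_eq fun s hs => ?_).symm
  rw [Measure.map_apply (measurable_update_pair j) (MeasurableSet.univ_pi hs)]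
  have hpre : (fun z : (Fin m → Euc d) × Euc d => Function.update z.1 j z.2) ⁻¹'
        Set.pi Set.univ s
      = (Set.pi Set.univ (Function.update s j Set.univ)) ×ˢ s j := by
    ext z
    simp only [Set.mem_preimage, Set.mem_pi, Set.mem_univ, true_implies, Set.mem_prod]
    constructor
    · intro h
      refine ⟨fun i => ?_, by simpa using h j⟩
      by_cases hij : i = j
      · subst hij; simp
      · simpa [Function.update_of_ne hij] using h i
    · rintro ⟨h1, h2⟩ i
      by_cases hij : i = j
      · subst hij; simpa using h2
      · have := h1 i; simpa [Function.update_of_ne hij] using this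
  rw [hpre, Measure.prod_prod, Measure.pi_pi]
  have h1 : ∀ i : Fin m, ν i (Function.update s j Set.univ i)
      = Function.update (fun i => ν i (s i)) j 1 i := by
    intro i
    by_cases hij : i = j
    · subst hij; simp
    · simp [Function.update_of_ne hij]
  simp_rw [h1]
  rw [Finset.prod_update_of_mem (Finset.mem_univ j), one_mul,
    ← Finset.mul_prod_erase Finset.univ (fun i => ν i (s i)) (Finset.mem_univ j), mul_comm,
    Finset.sdiff_singleton_eq_erase]

end AuxEmp

/-- **Variance bound for the empirical mass defect of a feasible Gibbs density.**
If `|1 − p| ≤ M` a.e. and `p` satisfies the marginal feasibility constraints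
`∫ p d(⊗_{i≠j} ν i) = 1` (ν j-a.e. in the frozen coordinate, expressed below via
`Function.update` and the full product measure), then
`E[(∫ (1 − p) d(ν̂₁^N ⊗ ⋯ ⊗ ν̂_m^N))²] ≤ M² m / N`. -/
theorem empirical_mass_defect_variance {d m : ℕ} (hm : 0 < m)
    (𝒳 : Set (Euc d)) (h𝒳c : IsCompact 𝒳) (h𝒳b : ∀ x ∈ 𝒳, ∀ i, |x i| ≤ 1)
    (h𝒳int : (interior 𝒳).Nonempty)
    (ν : Fin m → Measure (Euc d)) (hν : ∀ j, IsProbabilityMeasure (ν j))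
    (hνsupp : ∀ j, ν j 𝒳 = 1)
    (Ω : Type) [MeasurableSpace Ω] (μ : Measure Ω) (hμ : IsProbabilityMeasure μ)
    (N : ℕ) (hN : 0 < N)
    (X : Fin m → Fin N → Ω → Euc d)
    (hXm : ∀ j k, Measurable (X j k))
    (hXlaw : ∀ j k, μ.map (X j k) = ν j)
    (hXindep : iIndepFun
      (fun (p : Fin m × Fin N) ω => X p.1 p.2 ω) μ)
    (p : (Fin m → Euc d) → ℝ) (hpm : Measurable p)
    (M : ℝ) (hM : 0 < M)
    (hpb : ∀ᵐ x ∂(Measure.pi ν), |1 - p x| ≤ M)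
    (hfeas : ∀ j : Fin m, ∀ᵐ t ∂(ν j),
      ∫ y, p (Function.update y j t) ∂(Measure.pi ν) = 1) :
    ∫ ω, (∫ x, (1 - p x) ∂(Measure.pi (fun j => empMeas (fun k => X j k ω)))) ^ 2 ∂μ ≤
      M ^ 2 * m / N := by
  classical
  haveI := hμ
  haveI : ∀ j, IsProbabilityMeasure (ν j) := hν
  set g : (Fin m → Euc d) → ℝ := fun x => 1 - p x with hg
  have hgm : StronglyMeasurable g := (measurable_const.sub hpm).stronglyMeasurable
  set Y : (Fin m → Fin N) → Ω → (Fin m → Euc d) := fun k ω j => X j (k j) ω with hY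
  have hYm : ∀ k, Measurable (Y k) := fun k => measurable_pi_lambda _ fun j => hXm j (k j)
  have hlaw : ∀ k, μ.map (Y k) = Measure.pi ν := fun k => joint_law hXm hXlaw hXindep k
  have hset : MeasurableSet {x : Fin m → Euc d | |g x| ≤ M} :=
    measurableSet_le (measurable_const.sub hpm).abs measurable_const
  have hbound : ∀ k, ∀ᵐ ω ∂μ, |g (Y k ω)| ≤ M := by
    intro k
    have h1 : ∀ᵐ x ∂(μ.map (Y k)), |g x| ≤ M := by rw [hlaw k]; exact hpb
    exact (ae_map_iff (hYm k).aemeasurable hset).mp h1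
  have hint1 : ∀ k, Integrable (fun ω => g (Y k ω)) μ := fun k =>
    Integrable.mono' (integrable_const M)
      ((hgm.comp_measurable (hYm k)).aestronglyMeasurable)
      ((hbound k).mono fun ω h => by simpa [Real.norm_eq_abs] using h)
  have hint2 : ∀ k k', Integrable (fun ω => g (Y k ω) * g (Y k' ω)) μ := by
    intro k k'
    refine Integrable.mono' (integrable_const (M * M))
      (((hgm.comp_measurable (hYm k)).mul
        (hgm.comp_measurable (hYm k'))).aestronglyMeasurable) ?_
    filter_upwards [hbound k, hbound k'] with ω h1 h2
    rw [Real.norm_eq_abs, abs_mul]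
    exact mul_le_mul h1 h2 (abs_nonneg _) (le_trans (abs_nonneg _) h1)
  have hgint : Integrable g (Measure.pi ν) :=
    Integrable.mono' (integrable_const M) hgm.aestronglyMeasurable
      (hpb.mono fun x h => by simpa [Real.norm_eq_abs, hg] using h)
  have hpint : Integrable p (Measure.pi ν) := by
    have h2 := (integrable_const (1 : ℝ)).sub hgint
    have h3 : ((fun _ => (1:ℝ)) - g) = p := by funext x; simp [hg]
    rwa [h3] at h2
  have hp1 : ∫ x, p x ∂(Measure.pi ν) = 1 := by
    set j0 : Fin m := ⟨0, hm⟩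
    have hφm := measurable_update_pair (d := d) j0
    have hmap := map_update_pi ν j0
    have hpint' : Integrable (fun z : (Fin m → Euc d) × Euc d => p (Function.update z.1 j0 z.2))
        ((Measure.pi ν).prod (ν j0)) := by
      have h3 := hpint
      rw [← hmap] at h3
      exact (integrable_map_measure hpm.aestronglyMeasurable hφm.aemeasurable).mp h3
    have e1 : ∫ x, p x ∂(Measure.pi ν)
        = ∫ z, p (Function.update z.1 j0 z.2) ∂((Measure.pi ν).prod (ν j0)) := by
      conv_lhs => rw [← hmap]
      exact integral_map hφm.aemeasurable (by rw [hmap]; exact hpm.aestronglyMeasurable)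
    have e2 : ∫ z, p (Function.update z.1 j0 z.2) ∂((Measure.pi ν).prod (ν j0))
        = ∫ t, ∫ y, p (Function.update y j0 t) ∂(Measure.pi ν) ∂(ν j0) :=
      integral_prod_symm _ hpint'
    rw [e1, e2, integral_congr_ae (hfeas j0)]
    simp
  have hmean : ∀ k, ∫ ω, g (Y k ω) ∂μ = 0 := by
    intro k
    have h4 : ∫ ω, g (Y k ω) ∂μ = ∫ x, g x ∂(μ.map (Y k)) :=
      (integral_map (hYm k).aemeasurable (by rw [hlaw k]; exact hgm.aestronglyMeasurable)).symm
    rw [h4, hlaw k, hg]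
    rw [integral_sub (integrable_const 1) hpint, integral_const, probReal_univ, hp1]
    simp
  have hzero : ∀ k k', (∀ j, k j ≠ k' j) → ∫ ω, g (Y k ω) * g (Y k' ω) ∂μ = 0 := by
    intro k k' hkk'
    set S := Finset.univ.image (fun j : Fin m => (j, k j)) with hSdef
    set T := Finset.univ.image (fun j : Fin m => (j, k' j)) with hTdef
    have hST : Disjoint S T := by
      rw [Finset.disjoint_left]
      rintro ⟨a, b⟩ haS haT
      simp only [hSdef, hTdef, Finset.mem_image, Finset.mem_univ, true_and] at haS haT
      obtain ⟨j1, hj1⟩ := haS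
      obtain ⟨j2, hj2⟩ := haT
      cases hj1
      injection hj2 with h1 h2
      subst h1
      exact hkk' j2 h2.symm
    have hfm : ∀ i : Fin m × Fin N, Measurable fun ω => X i.1 i.2 ω := fun i => hXm i.1 i.2
    have hind0 := hXindep.indepFun_finset S T hST hfm
    have hmemS : ∀ j : Fin m, (j, k j) ∈ S := fun j =>
      Finset.mem_image.mpr ⟨j, Finset.mem_univ j, rfl⟩
    have hmemT : ∀ j : Fin m, (j, k' j) ∈ T := fun j =>
      Finset.mem_image.mpr ⟨j, Finset.mem_univ j, rfl⟩
    have hφS : Measurable fun v : ({i // i ∈ S} → Euc d) => g (fun j => v ⟨(j, k j), hmemS j⟩) :=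
      hgm.measurable.comp (measurable_pi_lambda _ fun j => measurable_pi_apply _)
    have hφT : Measurable fun v : ({i // i ∈ T} → Euc d) => g (fun j => v ⟨(j, k' j), hmemT j⟩) :=
      hgm.measurable.comp (measurable_pi_lambda _ fun j => measurable_pi_apply _)
    have hfun : IndepFun (fun ω => g (Y k ω)) (fun ω => g (Y k' ω)) μ := hind0.comp hφS hφT
    have h5 := hfun.integral_fun_mul_eq_mul_integral (hint1 k).1 (hint1 k').1
    have h6 : ∫ ω, g (Y k ω) * g (Y k' ω) ∂μ
        = (∫ ω, g (Y k ω) ∂μ) * ∫ ω, g (Y k' ω) ∂μ := h5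
    rw [h6, hmean k, hmean k']
    simp
  have hSeq : ∀ ω, (∫ x, (1 - p x) ∂(Measure.pi (fun j => empMeas (fun k => X j k ω))))
      = ((N : ℝ) ^ m)⁻¹ * ∑ k : Fin m → Fin N, g (Y k ω) := fun ω =>
    integral_pi_empMeas hN (fun j k => X j k ω) g hgm
  have key : ∀ k k' : Fin m → Fin N, ∫ ω, g (Y k ω) * g (Y k' ω) ∂μ
      ≤ ∑ j : Fin m, (if k j = k' j then M ^ 2 else 0) := by
    intro k k'
    have hnonneg : ∀ j ∈ Finset.univ, (0:ℝ) ≤ if k j = k' j then M ^ 2 else 0 := by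
      intro j _
      by_cases h : k j = k' j <;> simp [h, sq_nonneg]
    by_cases hd : ∀ j, k j ≠ k' j
    · rw [hzero k k' hd]
      exact Finset.sum_nonneg hnonneg
    · push_neg at hd
      obtain ⟨j0, hj0⟩ := hd
      have hb : ∀ᵐ ω ∂μ, g (Y k ω) * g (Y k' ω) ≤ M ^ 2 := by
        filter_upwards [hbound k, hbound k'] with ω h1 h2
        calc g (Y k ω) * g (Y k' ω) ≤ |g (Y k ω) * g (Y k' ω)| := le_abs_self _
          _ = |g (Y k ω)| * |g (Y k' ω)| := abs_mul _ _
          _ ≤ M * M := mul_le_mul h1 h2 (abs_nonneg _) (le_trans (abs_nonneg _) h1)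
          _ = M ^ 2 := (sq M).symm
      have hle : ∫ ω, g (Y k ω) * g (Y k' ω) ∂μ ≤ M ^ 2 := by
        calc ∫ ω, g (Y k ω) * g (Y k' ω) ∂μ ≤ ∫ _, M ^ 2 ∂μ :=
              integral_mono_ae (hint2 k k') (integrable_const _) hb
          _ = M ^ 2 := by simp
      refine le_trans hle ?_
      have h7 := Finset.single_le_sum hnonneg (Finset.mem_univ j0)
      simpa [hj0] using h7
  have hsum : ∑ k : Fin m → Fin N, ∑ k' : Fin m → Fin N, ∫ ω, g (Y k ω) * g (Y k' ω) ∂μ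
      ≤ (N : ℝ) ^ m * (m * ((N : ℝ) ^ (m - 1) * M ^ 2)) := by
    calc ∑ k : Fin m → Fin N, ∑ k' : Fin m → Fin N, ∫ ω, g (Y k ω) * g (Y k' ω) ∂μ
        ≤ ∑ k : Fin m → Fin N, ∑ k' : Fin m → Fin N, ∑ j : Fin m,
            (if k j = k' j then M ^ 2 else 0) :=
          Finset.sum_le_sum fun k _ => Finset.sum_le_sum fun k' _ => key k k'
      _ = ∑ _k : Fin m → Fin N, ∑ _j : Fin m, ((N : ℝ) ^ (m - 1) * M ^ 2) := by
          refine Finset.sum_congr rfl fun k _ => ?_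
          rw [Finset.sum_comm]
          refine Finset.sum_congr rfl fun j _ => ?_
          rw [sum_eval_eq hm j (fun a => if k j = a then M ^ 2 else 0)]
          congr 1
          simp
      _ = (N : ℝ) ^ m * (m * ((N : ℝ) ^ (m - 1) * M ^ 2)) := by
          simp only [Finset.sum_const, Finset.card_univ, Fintype.card_fun, Fintype.card_fin,
            nsmul_eq_mul]
          push_cast
          ring
  calc ∫ ω, (∫ x, (1 - p x) ∂(Measure.pi (fun j => empMeas (fun k => X j k ω)))) ^ 2 ∂μ
      = ∫ ω, (((N : ℝ) ^ m)⁻¹) ^ 2 * (∑ k : Fin m → Fin N, g (Y k ω)) ^ 2 ∂μ := by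
        refine integral_congr_ae (ae_of_all _ fun ω => ?_)
        dsimp only
        rw [hSeq ω, mul_pow]
    _ = (((N : ℝ) ^ m)⁻¹) ^ 2
        * ∑ k : Fin m → Fin N, ∑ k' : Fin m → Fin N, ∫ ω, g (Y k ω) * g (Y k' ω) ∂μ := by
        rw [integral_const_mul]
        congr 1
        have hsq : ∀ ω, (∑ k : Fin m → Fin N, g (Y k ω)) ^ 2
            = ∑ k : Fin m → Fin N, ∑ k' : Fin m → Fin N, g (Y k ω) * g (Y k' ω) := by
          intro ω; rw [sq, Finset.sum_mul_sum]
        simp_rw [hsq]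
        rw [integral_finset_sum _ (fun k _ =>
          integrable_finset_sum _ (fun k' _ => hint2 k k'))]
        exact Finset.sum_congr rfl fun k _ => integral_finset_sum _ (fun k' _ => hint2 k k')
    _ ≤ (((N : ℝ) ^ m)⁻¹) ^ 2 * ((N : ℝ) ^ m * (m * ((N : ℝ) ^ (m - 1) * M ^ 2))) :=
        mul_le_mul_of_nonneg_left hsum (by positivity)
    _ = M ^ 2 * m / N := by
        have hn : (0:ℝ) < (N : ℝ) := by exact_mod_cast hN
        have hmm : m - 1 + 1 = m := Nat.succ_pred_eq_of_pos hm
        have hNm : (N : ℝ) ^ m = (N : ℝ) ^ (m - 1) * N := by rw [← pow_succ, hmm]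
        rw [hNm]
        have ha : (0:ℝ) < (N : ℝ) ^ (m - 1) := by positivity
        field_simp
end
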